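/- Let X be a topological space, x₀ ∈ X, n > 1, and A : Xⁿ → X a continuous symmetric unanimous map. Let ρ : X → X be defined via loops: the induced map ρ_* : π₁(X,x₀) → π₁(X,x₀) sending [γ] to A_*([γ],[c],...,[c]) where c is the constant loop. Then n · ρ_*([γ]) = [γ] for all [γ] ∈ π₁(X, x₀), where the multiple is taken in π₁ (which is abelian). -/

import Mathlib

open CategoryTheory

universe u

/-- The homomorphism `π₁(X, x) → π₁(Y, y)` induced by a continuous map `f` with
`f x = y`. -/
noncomputable def piOneMap {X Y : Type u} [TopologicalSpace X] [TopologicalSpace Y]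
    (f : C(X, Y)) (x : X) (y : Y) (h : f x = y) :
    FundamentalGroup X x →* FundamentalGroup Y y :=
  (Iso.conj (eqToIso
      (show FundamentalGroupoid.mk (f x) = FundamentalGroupoid.mk y by
        rw [h]))).toMonoidHom.comp
    ((FundamentalGroupoid.fundamentalGroupoidFunctor.map
      (show TopCat.of X ⟶ TopCat.of Y from TopCat.ofHom f)).mapEnd ⟨x⟩)

section Aux

variable {X Y Z : Type u} [TopologicalSpace X] [TopologicalSpace Y] [TopologicalSpace Z]

lemma piOneMap_congr (f f' : C(X,Y)) (hff : f = f') (x : X) (y : Y) (hf : f x = y)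
    (hf' : f' x = y) : piOneMap f x y hf = piOneMap f' x y hf' := by subst hff; rfl

lemma piOneMap_hom (f : C(X,Y)) (x : X) (g : FundamentalGroup X x) :
    FundamentalGroup.toPath (piOneMap f x (f x) rfl g)
      = (FundamentalGroup.toPath g).map f := by
  rw [piOneMap]
  erw [MonoidHom.comp_apply, eqToIso_refl, MulEquiv.coe_toMonoidHom, Iso.refl_conj]
  rfl

lemma mapFn_id (x : X) (p : Path.Homotopic.Quotient x x) :
    p.map (ContinuousMap.id X) = p := by
  induction p using Quotient.inductionOn with
  | h a => rfl

lemma mapFn_comp (g : C(X,Y)) (f : C(Y,Z)) (x : X) (p : Path.Homotopic.Quotient x x) :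
    p.map (f.comp g) = (p.map g).map f := by
  induction p using Quotient.inductionOn with
  | h a =>
    rfl

lemma piOneMap_id (x : X) : piOneMap (ContinuousMap.id X) x x rfl = MonoidHom.id _ := by
  ext g
  show piOneMap (ContinuousMap.id X) x x rfl g = g
  exact (piOneMap_hom (ContinuousMap.id X) x g).trans (mapFn_id x g)

lemma piOneMap_comp (g : C(X,Y)) (f : C(Y,Z)) (x : X) (y : Y) (z : Z)
    (hg : g x = y) (hf : f y = z) (h : (f.comp g) x = z) :
    piOneMap (f.comp g) x z h =
      (piOneMap f y z hf).comp (piOneMap g x y hg) := by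
  subst hg; subst hf
  ext u
  rw [MonoidHom.comp_apply]
  refine (piOneMap_hom (f.comp g) x u).trans ?_
  refine Eq.trans ?_ (piOneMap_hom f (g x) (piOneMap g x (g x) rfl u)).symm
  rw [mapFn_comp]
  congr 1
  exact (piOneMap_hom g x u).symm

/-- Projection onto the `i`-th coordinate, as a continuous map. -/
def projC {n : ℕ} (i : Fin n) : C((Fin n → X), X) :=
  ⟨fun x => x i, continuous_apply i⟩

/-- Permutation of coordinates, as a continuous map. -/
def permC {n : ℕ} (σ : Equiv.Perm (Fin n)) : C((Fin n → X), (Fin n → X)) :=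
  ⟨fun x => x ∘ σ, continuous_pi fun i => continuous_apply (σ i)⟩

/-- The diagonal, as a continuous map. -/
def diagC (n : ℕ) : C(X, (Fin n → X)) :=
  ⟨fun x _ => x, continuous_pi fun _ => continuous_id⟩

/-- Elements of the fundamental group of a product are determined by their projections. -/
lemma piOne_pi_ext {n : ℕ} (c : Fin n → X) {g g' : FundamentalGroup (Fin n → X) c}
    (h : ∀ i, piOneMap (projC i) c (c i) rfl g = piOneMap (projC i) c (c i) rfl g') :
    g = g' := by
  have h2 : ∀ i, Path.Homotopic.proj i (FundamentalGroup.toPath g : Path.Homotopic.Quotient c c) =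
      Path.Homotopic.proj i (FundamentalGroup.toPath g' : Path.Homotopic.Quotient c c) := fun i => by
    have h3 := h i
    exact (piOneMap_hom (projC i) c g).symm.trans
      (h3.trans (piOneMap_hom (projC i) c g'))
  calc (FundamentalGroup.toPath g : Path.Homotopic.Quotient c c)
      = Path.Homotopic.pi (fun i => Path.Homotopic.proj i
          (FundamentalGroup.toPath g : Path.Homotopic.Quotient c c)) := (Path.Homotopic.pi_proj _).symm
    _ = Path.Homotopic.pi (fun i => Path.Homotopic.proj i
          (FundamentalGroup.toPath g' : Path.Homotopic.Quotient c c)) := by rw [funext h2]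
    _ = g' := Path.Homotopic.pi_proj _

end Aux

/-- Let `A : Xⁿ → X` (`n > 1`) be continuous, symmetric and unanimous, and let
`ρ_* : π₁(X, x₀) → π₁(X, x₀)` send `[γ]` to `A_*([γ], [c], ..., [c])`, i.e. to
`A_* δ` where `δ ∈ π₁(Xⁿ)` has first coordinate `[γ]` and trivial remaining
coordinates (coordinates read through the projections `π₁(Xⁿ) → π₁(X)`).
Then `n · ρ_*([γ]) = [γ]`, i.e. `(A_* δ)ⁿ = [γ]`. -/
theorem stmt9 {X : Type u} [TopologicalSpace X] (x₀ : X) (n : ℕ) (hn : 1 < n)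
    (A : C((Fin n → X), X))
    (hsym : ∀ (σ : Equiv.Perm (Fin n)) (x : Fin n → X), A (x ∘ σ) = A x)
    (huna : ∀ x : X, A (fun _ => x) = x)
    (γ : FundamentalGroup X x₀)
    (δ : FundamentalGroup (Fin n → X) (fun _ => x₀))
    (hδ : ∀ i : Fin n,
      piOneMap ⟨fun x => x i, continuous_apply i⟩ (fun _ => x₀) x₀ rfl δ =
        if i = (⟨0, by omega⟩ : Fin n) then γ else 1) :
    (piOneMap A (fun _ => x₀) x₀ (huna x₀) δ) ^ n = γ := by
  haveI : NeZero n := ⟨by omega⟩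
  have hδ' : ∀ i : Fin n,
      piOneMap (projC i) (fun _ => x₀) x₀ rfl δ = if i = 0 then γ else 1 := by
    intro i
    have h0 : (⟨0, by omega⟩ : Fin n) = 0 := rfl
    rw [← h0]
    exact hδ i
  -- the `n` cyclically shifted copies of `δ`
  have hd : ∀ k : Fin n, ∃ dk : FundamentalGroup (Fin n → X) (fun _ => x₀),
      dk = piOneMap (permC (Equiv.addRight k)) (fun _ => x₀) (fun _ => x₀) rfl δ :=
    fun k => ⟨_, rfl⟩
  choose d hd using hd
  -- projections of `d k`
  have hPd : ∀ i k : Fin n,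
      piOneMap (projC i) (fun _ => x₀) x₀ rfl (d k) = if k = -i then γ else 1 := by
    intro i k
    rw [hd k]
    have h1 : piOneMap (projC i) (fun _ => x₀) x₀ rfl
          (piOneMap (permC (Equiv.addRight k)) (fun _ => x₀) (fun _ => x₀) rfl δ) =
        piOneMap ((projC i).comp (permC (Equiv.addRight k))) (fun _ => x₀) x₀ rfl δ := by
      rw [piOneMap_comp (permC (Equiv.addRight k)) (projC i) (fun _ => x₀) (fun _ => x₀) x₀
        rfl rfl rfl]
      rfl
    rw [h1, piOneMap_congr _ (projC (i + k)) (by ext x; rfl) (fun _ => x₀) x₀ rfl rfl]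
    rw [hδ' (i + k)]
    congr 1
    simp only [eq_iff_iff]
    constructor
    · intro h; rw [eq_neg_iff_add_eq_zero, add_comm]; exact h
    · intro h; rw [eq_neg_iff_add_eq_zero, add_comm] at h; exact h
  -- the product of the shifted copies
  have hPD : ∀ i : Fin n,
      piOneMap (projC i) (fun _ => x₀) x₀ rfl (List.ofFn d).prod = γ := by
    intro i
    rw [map_list_prod, List.map_ofFn]
    have h2 : List.ofFn ((piOneMap (projC i) (fun _ => x₀) x₀ rfl) ∘ d)
        = List.ofFn (fun k : Fin n => if k = -i then γ else 1) :=
      congrArg List.ofFn (funext fun k => hPd i k)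
    rw [h2, List.ofFn_eq_map,
      List.prod_map_eq_pow_single (-i) _ (fun a ha _ => if_neg ha),
      if_pos rfl,
      List.count_eq_one_of_mem (List.nodup_finRange n) (List.mem_finRange _), pow_one]
  -- the diagonal image of γ has the same projections
  have hPE : ∀ i : Fin n,
      piOneMap (projC i) (fun _ => x₀) x₀ rfl
        (piOneMap (diagC n) x₀ (fun _ => x₀) rfl γ) = γ := by
    intro i
    have h1 : piOneMap (projC i) (fun _ => x₀) x₀ rfl
          (piOneMap (diagC n) x₀ (fun _ => x₀) rfl γ) =
        piOneMap ((projC (X := X) i).comp (diagC n)) x₀ x₀ rfl γ := by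
      rw [piOneMap_comp (diagC n) (projC i) x₀ (fun _ => x₀) x₀ rfl rfl rfl]
      rfl
    rw [h1, piOneMap_congr _ (ContinuousMap.id X) (by ext x; rfl) x₀ x₀ rfl rfl, piOneMap_id]
    rfl
  have hDE : (List.ofFn d).prod = piOneMap (diagC n) x₀ (fun _ => x₀) rfl γ :=
    piOne_pi_ext (fun _ => x₀) fun i => (hPD i).trans (hPE i).symm
  -- `A_*` of the shifted copies
  have hAd : ∀ k : Fin n, piOneMap A (fun _ => x₀) x₀ (huna x₀) (d k)
      = piOneMap A (fun _ => x₀) x₀ (huna x₀) δ := by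
    intro k
    rw [hd k]
    have h1 : piOneMap A (fun _ => x₀) x₀ (huna x₀)
          (piOneMap (permC (Equiv.addRight k)) (fun _ => x₀) (fun _ => x₀) rfl δ) =
        piOneMap (A.comp (permC (Equiv.addRight k))) (fun _ => x₀) x₀
          (by simpa [permC, Function.comp_def] using huna x₀) δ := by
      exact (DFunLike.congr_fun (piOneMap_comp (permC (Equiv.addRight k)) A (fun _ => x₀)
        (fun _ => x₀) x₀ rfl (huna x₀) _) δ).symm
    rw [h1, piOneMap_congr (A.comp (permC (Equiv.addRight k))) A (by ext x; exact hsym (Equiv.addRight k) x) (fun _ => x₀) x₀ _ (huna x₀)]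
  have hAD : piOneMap A (fun _ => x₀) x₀ (huna x₀) (List.ofFn d).prod
      = (piOneMap A (fun _ => x₀) x₀ (huna x₀) δ) ^ n := by
    rw [map_list_prod, List.map_ofFn]
    have h2 : List.ofFn ((piOneMap A (fun _ => x₀) x₀ (huna x₀)) ∘ d)
        = List.ofFn (fun _ : Fin n => piOneMap A (fun _ => x₀) x₀ (huna x₀) δ) :=
      congrArg List.ofFn (funext fun k => hAd k)
    rw [h2, List.ofFn_const, List.prod_replicate]
  -- `A_*` of the diagonal image
  have hAE : piOneMap A (fun _ => x₀) x₀ (huna x₀)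
      (piOneMap (diagC n) x₀ (fun _ => x₀) rfl γ) = γ := by
    have h1 : piOneMap A (fun _ => x₀) x₀ (huna x₀)
          (piOneMap (diagC n) x₀ (fun _ => x₀) rfl γ) =
        piOneMap (A.comp (diagC n)) x₀ x₀ (by simpa [diagC] using huna x₀) γ := by
      exact (DFunLike.congr_fun (piOneMap_comp (diagC n) A x₀ (fun _ => x₀) x₀ rfl (huna x₀) _)
        γ).symm
    rw [h1, piOneMap_congr (A.comp (diagC n)) (ContinuousMap.id X) (by ext x; exact huna x) x₀ x₀ _ rfl,
      piOneMap_id]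
    rfl
  rw [← hAD, hDE, hAE]
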